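/- Let 0 < p < ∞ and n(p-1) ≤ α < ∞, and let 0 < q ≤ 1. If f ∈ L^q(ℝⁿ) and f ≠ 0 (as an a.e. class), then the Hardy–Littlewood maximal function Mf is not in L^p(|x|^α dx), i.e. ∫_{ℝⁿ} (Mf(x))^p |x|^α dx = ∞. -/

import Mathlib

open MeasureTheory Metric ENNReal Filter
open scoped ENNReal NNReal

noncomputable section

abbrev Rn (n : ℕ) := EuclideanSpace ℝ (Fin n)

/-- A `(p,s,α)`-block: supported in a closed ball `B(x₀,r)` with
`‖a‖_{L^s} ≤ |B|^{-α/(pn)-1/p+1/s}` (with `1/s = 0` when `s = ∞`). -/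
def IsBlock (n : ℕ) (p : ℝ) (s : ℝ≥0∞) (α : ℝ) (a : Rn n → ℝ) : Prop :=
  Measurable a ∧
  ∃ x₀ : Rn n, ∃ r : ℝ, 0 < r ∧ (∀ x, x ∉ closedBall x₀ r → a x = 0) ∧
    eLpNorm a s volume ≤
      ENNReal.ofReal ((volume (closedBall x₀ r)).toReal ^ (-α / (p * n) - 1 / p + s.toReal⁻¹))

/-- A decomposition `f = Σ l k • a k` (a.e. convergence) into `(p,s,α)`-blocks with
`Σ |l k| ^ min p 1 < ∞`. -/
def IsBLDecomp (n : ℕ) (p : ℝ) (s : ℝ≥0∞) (α : ℝ)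
    (f : Rn n → ℝ) (l : ℕ → ℝ) (a : ℕ → Rn n → ℝ) : Prop :=
  (∀ k, IsBlock n p s α (a k)) ∧ Summable (fun k => |l k| ^ min p 1) ∧
  (∀ᵐ x : Rn n ∂volume, HasSum (fun k => l k * a k x) (f x))

/-- Membership in the block space `BL^{p,s}_{|x|^α}`. -/
def MemBL (n : ℕ) (p : ℝ) (s : ℝ≥0∞) (α : ℝ) (f : Rn n → ℝ) : Prop :=
  ∃ l a, IsBLDecomp n p s α f l a

/-- The quasinorm of `BL^{p,s}_{|x|^α}`:
`inf (Σ |l k| ^ min p 1)^(1/min p 1)` over all block decompositions. -/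
def BLnorm (n : ℕ) (p : ℝ) (s : ℝ≥0∞) (α : ℝ) (f : Rn n → ℝ) : ℝ :=
  sInf { c | ∃ l a, IsBLDecomp n p s α f l a ∧
    c = (∑' k, |l k| ^ min p 1) ^ (min p 1)⁻¹ }

/-- The Hardy–Littlewood maximal function (sup over closed balls containing `x`). -/
def HLmax (n : ℕ) (f : Rn n → ℝ) (x : Rn n) : ℝ≥0∞ :=
  ⨆ (c : Rn n) (r : ℝ) (_ : 0 < r) (_ : x ∈ closedBall c r),
    (∫⁻ y in closedBall c r, (‖f y‖₊ : ℝ≥0∞) ∂volume) / volume (closedBall c r)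


lemma aux_real_annulus (n : ℕ) (p α : ℝ) (hp : 0 < p)
    (hθ : 0 ≤ α + (n : ℝ) - (n : ℝ) * p)
    (E Cr r : ℝ) (hE : 0 < E) (hC : 0 < Cr) (hr : 1 ≤ r) :
    E ^ p * Cr ^ (1 - p) * (min 1 ((2:ℝ) ^ α) * (4:ℝ) ^ (-((n:ℝ) * p)))
      ≤ (E / ((4 * r) ^ ((n:ℝ)) * Cr)) ^ p * min (r ^ α) ((2 * r) ^ α)
        * (r ^ ((n:ℝ)) * Cr) := by
  have hr0 : (0:ℝ) < r := lt_of_lt_of_le one_pos hr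
  set s : ℝ := (n : ℝ) with hs
  have h4r : (0:ℝ) < 4 * r := by linarith
  have hmin : min (r ^ α) ((2 * r) ^ α) = min 1 ((2:ℝ) ^ α) * r ^ α := by
    rw [Real.mul_rpow (by norm_num) hr0.le, min_mul_of_nonneg _ _ (Real.rpow_nonneg hr0.le α),
      one_mul]
  have hkey : r ^ α * r ^ s = r ^ (s * p) * r ^ (α + s - s * p) := by
    rw [← Real.rpow_add hr0, ← Real.rpow_add hr0]; ring_nf
  have hRHS : (E / ((4 * r) ^ s * Cr)) ^ p * min (r ^ α) ((2 * r) ^ α) * (r ^ s * Cr)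
      = E ^ p * Cr ^ (1 - p) * (min 1 ((2:ℝ) ^ α) * (4:ℝ) ^ (-(s * p)))
        * r ^ (α + s - s * p) := by
    rw [hmin, Real.div_rpow hE.le (by positivity), Real.mul_rpow (by positivity) hC.le,
      ← Real.rpow_mul h4r.le,
      Real.mul_rpow (by norm_num) hr0.le, Real.rpow_sub hC, Real.rpow_one,
      Real.rpow_neg (by norm_num : (0:ℝ) ≤ 4)]
    field_simp
    linear_combination hkey
  rw [hRHS]
  nth_rewrite 1 [← mul_one (E ^ p * Cr ^ (1 - p) * (min 1 ((2:ℝ) ^ α) * (4:ℝ) ^ (-(s * p))))]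
  have h1 : (1:ℝ) ≤ r ^ (α + s - s * p) := Real.one_le_rpow hr hθ
  have hpos : (0:ℝ) ≤ E ^ p * Cr ^ (1 - p) * (min 1 ((2:ℝ) ^ α) * (4:ℝ) ^ (-(s * p))) := by
    positivity
  exact mul_le_mul_of_nonneg_left h1 hpos


/-- for `0 < p < ∞`, `n(p-1) ≤ α`, `0 < q ≤ 1`, and `f ∈ L^q` with
`f ≠ 0` a.e., the maximal function `Mf` is never in `L^p(|x|^α dx)`. -/
theorem HLmax_not_in_weighted_Lp (n : ℕ) (hn : 0 < n) (p α q : ℝ)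
    (hp : 0 < p) (hα : (n : ℝ) * (p - 1) ≤ α) (hq : 0 < q) (hq1 : q ≤ 1)
    (f : Rn n → ℝ) (hf : MemLp f (ENNReal.ofReal q) volume)
    (hne : ¬ (f =ᵐ[volume] 0)) :
    ∫⁻ x, HLmax n f x ^ p * ENNReal.ofReal (‖x‖ ^ α) ∂volume = ∞ := by
  have hdim : Module.finrank ℝ (Rn n) = n := finrank_euclideanSpace_fin
  set C := volume (ball (0 : Rn n) 1) with hCdef
  have hC0 : C ≠ 0 := (measure_ball_pos volume 0 one_pos).ne'
  have hCt : C ≠ ∞ := measure_ball_lt_top.ne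
  have hvol : ∀ r : ℝ, 0 ≤ r →
      volume (closedBall (0 : Rn n) r) = ENNReal.ofReal (r ^ n) * C := by
    intro r hr
    rw [Measure.addHaar_closedBall volume 0 hr, hdim]
  have hmeasf : AEMeasurable (fun y => (‖f y‖₊ : ℝ≥0∞)) volume := hf.1.enorm
  have htot : ∫⁻ y, (‖f y‖₊ : ℝ≥0∞) ∂volume ≠ 0 := by
    intro h0
    refine hne ?_
    filter_upwards [(lintegral_eq_zero_iff' hmeasf).1 h0] with x hx
    simpa using hx
  obtain ⟨k₀, hk₀⟩ : ∃ k : ℕ,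
      ∫⁻ y in closedBall (0 : Rn n) ((k : ℝ) + 1), (‖f y‖₊ : ℝ≥0∞) ∂volume ≠ 0 := by
    by_contra h
    push_neg at h
    refine htot (le_antisymm ?_ (zero_le))
    have hcov : (Set.univ : Set (Rn n)) ⊆ ⋃ k : ℕ, closedBall (0 : Rn n) ((k : ℝ) + 1) := by
      intro x _
      refine Set.mem_iUnion.2 ⟨⌈‖x‖⌉₊, ?_⟩
      simp only [mem_closedBall, dist_zero_right]
      exact (Nat.le_ceil ‖x‖).trans (le_add_of_nonneg_right zero_le_one)
    calc ∫⁻ y, (‖f y‖₊ : ℝ≥0∞) ∂volume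
        = ∫⁻ y in Set.univ, (‖f y‖₊ : ℝ≥0∞) ∂volume := (setLIntegral_univ _).symm
      _ ≤ ∫⁻ y in ⋃ k : ℕ, closedBall (0 : Rn n) ((k : ℝ) + 1), (‖f y‖₊ : ℝ≥0∞) ∂volume :=
          lintegral_mono_set hcov
      _ ≤ ∑' k : ℕ, ∫⁻ y in closedBall (0 : Rn n) ((k : ℝ) + 1), (‖f y‖₊ : ℝ≥0∞) ∂volume :=
          lintegral_iUnion_le _ _
      _ = 0 := by simp [h]
  set R : ℝ := (k₀ : ℝ) + 1 with hRdef
  have hR1 : 1 ≤ R := by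
    have : (0:ℝ) ≤ (k₀ : ℝ) := Nat.cast_nonneg _
    linarith
  have hR0 : 0 < R := lt_of_lt_of_le one_pos hR1
  set ε := min (∫⁻ y in closedBall (0 : Rn n) R, (‖f y‖₊ : ℝ≥0∞) ∂volume) 1 with hεdef
  have hε0 : ε ≠ 0 := (lt_min (pos_iff_ne_zero.2 hk₀) one_pos).ne'
  have hεt : ε ≠ ∞ := ((min_le_right _ _).trans_lt one_lt_top).ne
  set εr := ε.toReal with hεrdef
  have hεr : 0 < εr := ENNReal.toReal_pos hε0 hεt
  have hεofReal : ENNReal.ofReal εr = ε := ENNReal.ofReal_toReal hεt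
  set Cr := C.toReal with hCrdef
  have hCr : 0 < Cr := ENNReal.toReal_pos hC0 hCt
  have hCofReal : ENNReal.ofReal Cr = C := ENNReal.ofReal_toReal hCt
  have hpt : ∀ (x : Rn n) (ρ : ℝ), ‖x‖ ≤ ρ → R ≤ ρ →
      ε / (ENNReal.ofReal (ρ ^ n) * C) ≤ HLmax n f x := by
    intro x ρ hxρ hRρ
    have hρ0 : 0 < ρ := hR0.trans_le hRρ
    have hmem : x ∈ closedBall (0 : Rn n) ρ := by
      simpa [mem_closedBall, dist_zero_right] using hxρ
    have h1 : ε / (ENNReal.ofReal (ρ ^ n) * C) ≤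
        (∫⁻ y in closedBall (0 : Rn n) ρ, (‖f y‖₊ : ℝ≥0∞) ∂volume) /
          volume (closedBall (0 : Rn n) ρ) := by
      rw [hvol ρ hρ0.le]
      exact ENNReal.div_le_div
        ((min_le_left _ _).trans (lintegral_mono_set (closedBall_subset_closedBall hRρ))) le_rfl
    exact h1.trans
      (le_iSup_of_le (0 : Rn n) (le_iSup_of_le ρ (le_iSup_of_le hρ0 (le_iSup_of_le hmem le_rfl))))
  set r : ℕ → ℝ := fun k => 2 ^ k * R with hrdef
  have hr1 : ∀ k, 1 ≤ r k := by
    intro k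
    have h2k : (1:ℝ) ≤ 2 ^ k := one_le_pow₀ one_le_two
    calc (1:ℝ) = 1 * 1 := (one_mul 1).symm
      _ ≤ 2 ^ k * R := mul_le_mul h2k hR1 zero_le_one (by positivity)
  have hr0 : ∀ k, 0 < r k := fun k => lt_of_lt_of_le one_pos (hr1 k)
  have hrsucc : ∀ k, r (k + 1) = 2 * r k := by
    intro k; simp only [hrdef, pow_succ]; ring
  have hrR : ∀ k, R ≤ r k := by
    intro k
    have h2k : (1:ℝ) ≤ 2 ^ k := one_le_pow₀ one_le_two
    calc R = 1 * R := (one_mul R).symm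
      _ ≤ 2 ^ k * R := mul_le_mul_of_nonneg_right h2k hR0.le
  have hrmono : ∀ {k j : ℕ}, k ≤ j → r k ≤ r j := by
    intro k j hkj
    exact mul_le_mul_of_nonneg_right (pow_le_pow_right₀ one_le_two hkj) hR0.le
  set A : ℕ → Set (Rn n) := fun k => closedBall 0 (r (k + 1)) \ closedBall 0 (r k) with hAdef
  have hAmeas : ∀ k, MeasurableSet (A k) :=
    fun _ => measurableSet_closedBall.diff measurableSet_closedBall
  have hAdisj : Pairwise (Function.onFun Disjoint A) := by
    have key : ∀ {k j : ℕ}, k < j → Disjoint (A k) (A j) := by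
      intro k j hkj
      refine Set.disjoint_left.2 ?_
      rintro x ⟨hx1, -⟩ ⟨-, hx4⟩
      exact hx4 (closedBall_subset_closedBall (hrmono hkj) hx1)
    intro k j hkj
    rcases hkj.lt_or_gt with h | h
    · exact key h
    · exact (key h).symm
  have hvolA : ∀ k, ENNReal.ofReal (r k ^ n) * C ≤ volume (A k) := by
    intro k
    have hsub : closedBall (0 : Rn n) (r k) ⊆ closedBall 0 (r (k + 1)) :=
      closedBall_subset_closedBall (hrmono (Nat.le_succ k))
    rw [hAdef]
    rw [measure_diff hsub measurableSet_closedBall.nullMeasurableSet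
        measure_closedBall_lt_top.ne, hvol _ (hr0 _).le, hvol _ (hr0 _).le,
      ← ENNReal.sub_mul (fun _ _ => hCt), ← ENNReal.ofReal_sub _ (by positivity)]
    refine mul_le_mul' (ENNReal.ofReal_le_ofReal ?_) le_rfl
    have h2 : (2:ℝ) ≤ 2 ^ n := by
      calc (2:ℝ) = 2 ^ 1 := (pow_one 2).symm
        _ ≤ 2 ^ n := pow_le_pow_right₀ one_le_two hn
    have hge : (0:ℝ) ≤ r k ^ n := by positivity
    rw [hrsucc k]
    nlinarith [mul_pow (2:ℝ) (r k) n]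
  set c₀ : ℝ := εr ^ p * Cr ^ (1 - p) * (min 1 ((2:ℝ) ^ α) * (4:ℝ) ^ (-((n:ℝ) * p))) with hc₀def
  have hc₀pos : 0 < c₀ := by
    have : (0:ℝ) < min 1 ((2:ℝ) ^ α) := lt_min one_pos (Real.rpow_pos_of_pos two_pos α)
    positivity
  have hθ : 0 ≤ α + (n:ℝ) - (n:ℝ) * p := by nlinarith
  have hann : ∀ k, ENNReal.ofReal c₀ ≤
      ∫⁻ x in A k, HLmax n f x ^ p * ENNReal.ofReal (‖x‖ ^ α) ∂volume := by
    intro k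
    have h4 : r (k + 2) = 4 * r k := by rw [hrsucc, hrsucc]; ring
    have hb : ∀ x ∈ A k,
        (ε / (ENNReal.ofReal (r (k + 2) ^ n) * C)) ^ p *
          ENNReal.ofReal (min (r k ^ α) ((2 * r k) ^ α)) ≤
        HLmax n f x ^ p * ENNReal.ofReal (‖x‖ ^ α) := by
      rintro x ⟨hx1, hx2⟩
      rw [mem_closedBall, dist_zero_right] at hx1
      have hx2' : r k < ‖x‖ := by
        by_contra hcon
        push_neg at hcon
        exact hx2 (by simpa [mem_closedBall, dist_zero_right] using hcon)
      have hxpos : 0 < ‖x‖ := (hr0 k).trans hx2'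
      refine mul_le_mul' ?_ ?_
      · refine ENNReal.rpow_le_rpow ?_ hp.le
        exact hpt x (r (k + 2)) (hx1.trans (hrmono (Nat.le_succ _))) (hrR _)
      · refine ENNReal.ofReal_le_ofReal ?_
        rcases le_or_gt 0 α with hα0 | hα0
        · exact (min_le_left _ _).trans (Real.rpow_le_rpow (hr0 k).le hx2'.le hα0)
        · refine (min_le_right _ _).trans ?_
          rw [← hrsucc k]
          exact Real.rpow_le_rpow_of_nonpos hxpos hx1 hα0.le
    have hc : ENNReal.ofReal c₀ ≤
        (ε / (ENNReal.ofReal (r (k + 2) ^ n) * C)) ^ p *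
          ENNReal.ofReal (min (r k ^ α) ((2 * r k) ^ α)) *
          (ENNReal.ofReal (r k ^ n) * C) := by
      have eA : ENNReal.ofReal (r (k + 2) ^ n) * C =
          ENNReal.ofReal ((4 * r k) ^ ((n:ℝ)) * Cr) := by
        rw [h4, ← hCofReal, ← ENNReal.ofReal_mul (by positivity), Real.rpow_natCast]
      have eB : ENNReal.ofReal (r k ^ n) * C = ENNReal.ofReal (r k ^ ((n:ℝ)) * Cr) := by
        rw [← hCofReal, ← ENNReal.ofReal_mul (by positivity), Real.rpow_natCast]
      rw [eA, eB, ← hεofReal, ← ENNReal.ofReal_div_of_pos (by positivity),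
        ENNReal.ofReal_rpow_of_pos (by positivity),
        ← ENNReal.ofReal_mul (by positivity), ← ENNReal.ofReal_mul (by positivity)]
      exact ENNReal.ofReal_le_ofReal
        (aux_real_annulus n p α hp hθ εr Cr (r k) hεr hCr (hr1 k))
    calc ENNReal.ofReal c₀
        ≤ (ε / (ENNReal.ofReal (r (k + 2) ^ n) * C)) ^ p *
            ENNReal.ofReal (min (r k ^ α) ((2 * r k) ^ α)) *
            (ENNReal.ofReal (r k ^ n) * C) := hc
      _ ≤ (ε / (ENNReal.ofReal (r (k + 2) ^ n) * C)) ^ p *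
            ENNReal.ofReal (min (r k ^ α) ((2 * r k) ^ α)) * volume (A k) :=
          mul_le_mul' le_rfl (hvolA k)
      _ = ∫⁻ _ in A k, (ε / (ENNReal.ofReal (r (k + 2) ^ n) * C)) ^ p *
            ENNReal.ofReal (min (r k ^ α) ((2 * r k) ^ α)) ∂volume :=
          (setLIntegral_const _ _).symm
      _ ≤ ∫⁻ x in A k, HLmax n f x ^ p * ENNReal.ofReal (‖x‖ ^ α) ∂volume :=
          setLIntegral_mono' (hAmeas k) hb
  refine top_le_iff.1 ?_
  calc (⊤ : ℝ≥0∞) = ∑' _ : ℕ, ENNReal.ofReal c₀ :=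
        (ENNReal.tsum_const_eq_top_of_ne_zero ((ENNReal.ofReal_pos.2 hc₀pos).ne')).symm
    _ ≤ ∑' k : ℕ, ∫⁻ x in A k, HLmax n f x ^ p * ENNReal.ofReal (‖x‖ ^ α) ∂volume :=
        ENNReal.tsum_le_tsum hann
    _ = ∫⁻ x in ⋃ k, A k, HLmax n f x ^ p * ENNReal.ofReal (‖x‖ ^ α) ∂volume :=
        (lintegral_iUnion hAmeas hAdisj _).symm
    _ ≤ ∫⁻ x, HLmax n f x ^ p * ENNReal.ofReal (‖x‖ ^ α) ∂volume :=
        setLIntegral_le_lintegral _ _
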